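/- Let A be the localization of the polynomial ring ℤ[β][y_1,y_2,y_3,...] at the multiplicative set generated by {1+βy_i : i ≥ 1}. Then the A-span of the double Grothendieck polynomials {𝔊_w(x;y) : w ∈ S_∞} inside the polynomial ring A[x_1,x_2,x_3,...] is all of A[x_1,x_2,x_3,...]; that is, every polynomial in the x-variables with coefficients in A is a finite A-linear combination of double Grothendieck polynomials. -/

import Mathlib

open scoped Classical

noncomputable section

/-! ## Signed permutations -/

/-- We model signed permutations (and ordinary permutations of the positive
integers) inside the group `Equiv.Perm ℤ`. -/
abbrev SPerm := Equiv.Perm ℤ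

/-- `w` is a signed permutation: `w(-i) = -w(i)` and finite support. -/
def IsSgn (w : SPerm) : Prop :=
  (∀ i : ℤ, w (-i) = -(w i)) ∧ Set.Finite {i : ℤ | w i ≠ i}

/-- The classical types B, C, D. -/
inductive XType | B | C | D
deriving DecidableEq

/-- `ℓ0(w)`: the number of positive `i` with `w i < 0`. -/
def negCount (w : SPerm) : ℕ := Set.ncard {i : ℤ | 0 < i ∧ w i < 0}

/-- Membership in `W^X_∞`. -/
def IsW : XType → SPerm → Prop
  | XType.B, w => IsSgn w
  | XType.C, w => IsSgn w
  | XType.D, w => IsSgn w ∧ Even (negCount w)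

/-- Membership in `W^X_n`: an element of `W^X_∞` fixing every `i` with `|i| > n`. -/
def IsWn (X : XType) (n : ℕ) (w : SPerm) : Prop :=
  IsW X w ∧ ∀ i : ℤ, (n : ℤ) < |i| → w i = i

/-- `inv(w)`: the number of pairs `(i,j)` of integers with `i < j` and `w i > w j`. -/
def invP (w : SPerm) : ℕ := Set.ncard {p : ℤ × ℤ | p.1 < p.2 ∧ w p.2 < w p.1}

/-- The Coxeter length functions `ℓ^B = ℓ^C = (inv + ℓ0)/2`, `ℓ^D = (inv - ℓ0)/2`. -/
def lenX : XType → SPerm → ℕ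
  | XType.B, w => (invP w + negCount w) / 2
  | XType.C, w => (invP w + negCount w) / 2
  | XType.D, w => (invP w - negCount w) / 2

/-- The element `t_{i,j}` exchanging `i ↔ j` and `-i ↔ -j`; in particular
`t_{0,k}` exchanges `-k ↔ k`, and `t_{j,j} = t_{-j,j} = 1`. -/
def tt (i j : ℤ) : SPerm :=
  if i = 0 then Equiv.swap (-j) j
  else if j = 0 then Equiv.swap (-i) i
  else if i = j ∨ i = -j then 1
  else Equiv.swap i j * Equiv.swap (-i) (-j)

/-- The simple generators: `st 0 = t_{0,1}`, `st (-1) = t_{-1,2}`,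
`st i = t_{i,i+1}` for `i ≥ 1`. -/
def st (a : ℤ) : SPerm := if a = -1 then tt (-1) 2 else tt a (a + 1)

/-- One step of the Demazure product: multiply by `st a` if this increases
length by one, else do nothing. -/
def demStep (X : XType) (w : SPerm) (a : ℤ) : SPerm :=
  if lenX X (w * st a) = lenX X w + 1 then w * st a else w

/-- Demazure product of `w` with the word `l` of simple generators. -/
def demFold (X : XType) (w : SPerm) (l : List ℤ) : SPerm := l.foldl (demStep X) w

/-- Letters allowed in Hecke words of type `X`. -/
def allowedLetter : XType → ℤ → Prop
  | XType.B, a => 0 ≤ a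
  | XType.C, a => 0 ≤ a
  | XType.D, a => a = -1 ∨ 1 ≤ a

/-- `l ∈ H^X(w)`: a Hecke word for `w` of type `X`. -/
def HeckeWord (X : XType) (w : SPerm) (l : List ℤ) : Prop :=
  (∀ a ∈ l, allowedLetter X a) ∧ demFold X 1 l = w

/-- `o^X(a)`. -/
def oX : XType → List ℤ → ℕ
  | XType.B, l => l.count 0
  | XType.C, _ => 0
  | XType.D, l => l.count (-1) + l.count 1

/-- `b ∈ C^X(a)`: a compatible sequence for the word `a`. -/
def CompatX (X : XType) (a : List ℤ) (b : List ℕ) : Prop :=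
  b.length = a.length ∧ (∀ x ∈ b, 0 < x) ∧ b.Pairwise (· ≤ ·) ∧
  (∀ i : ℕ, 0 < i → i + 1 < a.length →
    |a.getD (i-1) 0| ≤ |a.getD i 0| → |a.getD (i+1) 0| ≤ |a.getD i 0| →
    b.getD (i-1) 0 < b.getD (i+1) 0) ∧
  (X = XType.B → ∀ i : ℕ, i + 1 < a.length → a.getD i 0 = 0 → a.getD (i+1) 0 = 0 →
    b.getD i 0 < b.getD (i+1) 0) ∧
  (X = XType.D → ∀ i : ℕ, i + 1 < a.length →
    a.getD i 0 = a.getD (i+1) 0 → (a.getD i 0 = -1 ∨ a.getD i 0 = 1) →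
    b.getD i 0 < b.getD (i+1) 0)

/-- `γ(a,b)`: the number of `i` with `a_i = a_{i+1}` and `b_i = b_{i+1}`. -/
def gammaC (a : List ℤ) (b : List ℕ) : ℕ :=
  (List.range (a.length - 1)).countP
    (fun i => decide (a.getD i 0 = a.getD (i+1) 0 ∧ b.getD i 0 = b.getD (i+1) 0))

/-- `ℤ[β]`, with `β = Polynomial.X`. -/
abbrev PolyB := Polynomial ℤ

/-- The K-Stanley symmetric function `F^X_w(z) ∈ ℤ[β]⟦z_1,z_2,...⟧`
(the variable `z_i` has index `i ≥ 1`; index `0` is unused), defined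
coefficientwise: the coefficient of a monomial is the (finite) sum of the
contributions `2^{|b|-γ(a,b)-o^X(a)} β^{ℓ(a)-ℓ^X(w)}` over all pairs of a
Hecke word `a ∈ H^X(w)` and compatible sequence `b ∈ C^X(a)` with `z_b`
equal to the monomial. -/
def KSF (X : XType) (w : SPerm) : MvPowerSeries ℕ PolyB :=
  fun d => ∑ᶠ (p : List ℤ × List ℕ)
    (_ : HeckeWord X w p.1 ∧ CompatX X p.1 p.2 ∧ ∀ k : ℕ, d k = p.2.count k),
    (2 : PolyB) ^ (p.2.dedup.length - gammaC p.1 p.2 - oX X p.1) *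
      Polynomial.X ^ (p.1.length - lenX X w)

/-- A signed permutation is Grassmannian if `w(1) < w(2) < ⋯`. -/
def IsGrassmannian (w : SPerm) : Prop := ∀ i : ℤ, 0 < i → w i < w (i + 1)

/-- The descent set `Des(w) = {i > 0 : w(i) > w(i+1)}` (as a set of naturals). -/
def DesSet (w : SPerm) : Set ℕ := {i : ℕ | 0 < i ∧ w ((i : ℤ) + 1) < w (i : ℤ)}

/-- The last descent `LD(w) = max({0} ∪ Des(w))`. -/
def LD (w : SPerm) : ℕ := sSup (DesSet w)

/-- The partial order `≺_LD`. -/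
def precLD (u w : SPerm) : Prop :=
  LD u < LD w ∨ (0 < LD u ∧ LD u = LD w ∧ u (LD u : ℤ) < w (LD w : ℤ))

/-- `IncSteps f u ts` : successive right multiplications of `u` by the
elements of `ts` each increase `f` by exactly one. -/
def IncSteps (f : SPerm → ℕ) : SPerm → List SPerm → Prop
  | _, [] => True
  | u, t :: ts => f (u * t) = f u + 1 ∧ IncSteps f (u * t) ts

/-! ## Strict partitions and K-theoretic Schur P- and Q-functions -/

section

/-- A strict partition, encoded as a strictly decreasing list of positive
integers. -/
def StrictPart (l : List ℕ) : Prop := l.Pairwise (· > ·) ∧ ∀ x ∈ l, 0 < x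

/-- A partition (weakly decreasing list of positive integers). -/
def Partn (l : List ℕ) : Prop := l.Pairwise (· ≥ ·) ∧ ∀ x ∈ l, 0 < x

/-- Membership of the (1-based) box `p = (i,j)` in the shifted diagram `SD_l`. -/
def inSD (l : List ℕ) (p : ℕ × ℕ) : Prop :=
  1 ≤ p.1 ∧ p.1 ≤ l.length ∧ p.1 ≤ p.2 ∧ p.2 < p.1 + l.getD (p.1 - 1) 0

/-- `mu ⊆ lam`, i.e. `SD_mu ⊆ SD_lam`. -/
def subShape (mu lam : List ℕ) : Prop := ∀ p, inSD mu p → inSD lam p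

/-- Membership in the skew shifted diagram `SD_{lam/mu}`. -/
def inSkew (lam mu : List ℕ) (p : ℕ × ℕ) : Prop := inSD lam p ∧ ¬ inSD mu p

/-- A set-valued shifted tableau of shape `lam/mu`:  a finite nonempty set of
letters in each box of the skew shape, the empty set elsewhere.  The primed
alphabet `1' < 1 < 2' < 2 < ⋯` is encoded in `ℕ` by `k ↦ 2k` and `k' ↦ 2k-1`
(so primed letters are odd codes, and the order on codes is the alphabet
order). -/
def IsSVT (lam mu : List ℕ) (T : ℕ × ℕ → Finset ℕ) : Prop :=
  (∀ p, (T p).Nonempty ↔ inSkew lam mu p) ∧ (∀ p, ∀ v ∈ T p, 0 < v)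

/-- Semistandardness of a set-valued shifted tableau. -/
def IsSSVT (lam mu : List ℕ) (T : ℕ × ℕ → Finset ℕ) : Prop :=
  IsSVT lam mu T ∧
  (∀ i j : ℕ, inSkew lam mu (i, j) → inSkew lam mu (i, j+1) →
    (∀ u ∈ T (i, j), ∀ v ∈ T (i, j+1), u ≤ v) ∧
    (∀ v ∈ T (i, j), v ∈ T (i, j+1) → Even v)) ∧
  (∀ i j : ℕ, inSkew lam mu (i, j) → inSkew lam mu (i+1, j) →
    (∀ u ∈ T (i, j), ∀ v ∈ T (i+1, j), u ≤ v) ∧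
    (∀ v ∈ T (i, j), v ∈ T (i+1, j) → Odd v))

/-- `|T|`: total number of letters in `T`. -/
def tabSize (T : ℕ × ℕ → Finset ℕ) : ℕ := ∑ᶠ p : ℕ × ℕ, (T p).card

/-- The exponent of `z_k` in `z^T`: the number of boxes containing the letter
`k` (code `2k`) plus the number containing `k'` (code `2k-1`). -/
def tabWt (T : ℕ × ℕ → Finset ℕ) (k : ℕ) : ℕ :=
  Set.ncard {p : ℕ × ℕ | 2 * k ∈ T p} + Set.ncard {p : ℕ × ℕ | 2 * k - 1 ∈ T p}

/-- The K-theoretic Schur P-function `GP_{lam/mu}(z) ∈ ℤ[β]⟦z_1,z_2,...⟧`,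
defined coefficientwise as a tableau generating function. -/
def GPs (lam mu : List ℕ) : MvPowerSeries ℕ PolyB :=
  fun d => ∑ᶠ (T : ℕ × ℕ → Finset ℕ)
    (_ : IsSSVT lam mu T ∧
      (∀ i : ℕ, inSkew lam mu (i, i) → ∀ v ∈ T (i, i), Even v) ∧
      (∀ k : ℕ, d k = tabWt T k)),
    (Polynomial.X : PolyB) ^ (tabSize T - (lam.sum - mu.sum))

/-- The K-theoretic Schur Q-function `GQ_{lam/mu}(z) ∈ ℤ[β]⟦z_1,z_2,...⟧`. -/
def GQs (lam mu : List ℕ) : MvPowerSeries ℕ PolyB :=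
  fun d => ∑ᶠ (T : ℕ × ℕ → Finset ℕ)
    (_ : IsSSVT lam mu T ∧ (∀ k : ℕ, d k = tabWt T k)),
    (Polynomial.X : PolyB) ^ (tabSize T - (lam.sum - mu.sum))

end

/-! ## Type A: the symmetric group and double Grothendieck polynomials

We identify `S_∞` (permutations of the positive integers with finite support)
with the subgroup `W^A_∞` of signed permutations preserving the positive
integers; under this identification the Coxeter length of type A equals
`ℓ^B`, and the transposition `(i,j)` of positive integers corresponds to
`tt i j`. -/

section

/-- Membership in `S_∞ = W^A_∞`. -/
def IsAperm (w : SPerm) : Prop := IsSgn w ∧ ∀ i : ℤ, 0 < i → 0 < w i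

/-- The type A Coxeter length. -/
def lenA (w : SPerm) : ℕ := lenX XType.B w

/-- The polynomial ring `ℤ[β][x_1,x_2,...,y_1,y_2,...]`:  the variable
`Sum.inl i` is `x_i` and `Sum.inr i` is `y_i` (for `i ≥ 1`; index 0 unused). -/
abbrev MvP := MvPolynomial (ℕ ⊕ ℕ) PolyB

def xV (i : ℕ) : MvP := MvPolynomial.X (Sum.inl i)
def yV (i : ℕ) : MvP := MvPolynomial.X (Sum.inr i)
def βM : MvP := MvPolynomial.C Polynomial.X

/-- `w` is the reverse permutation `n ⋯ 3 2 1 ∈ S_n`. -/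
def IsRevA (n : ℕ) (w : SPerm) : Prop :=
  IsAperm w ∧ (∀ i : ℤ, 1 ≤ i → i ≤ (n : ℤ) → w i = (n : ℤ) + 1 - i) ∧
  (∀ i : ℤ, (n : ℤ) < i → w i = i)

/-- Exchange of the variables `x_i` and `x_{i+1}`. -/
def swapXvar (i : ℕ) (f : MvP) : MvP :=
  MvPolynomial.rename (Equiv.swap (Sum.inl i : ℕ ⊕ ℕ) (Sum.inl (i+1))) f

/-- `G` is the family of double Grothendieck polynomials `𝔊_w(x;y)`:
it takes the prescribed product value on each reverse permutation, and
satisfies the divided-difference recursion `𝔊_{w s_i} = π_i 𝔊_w` whenever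
`w(i) > w(i+1)` (stated multiplied through by `x_i - x_{i+1}`). -/
def GrothFamily (G : SPerm → MvP) : Prop :=
  (∀ n : ℕ, ∀ w : SPerm, IsRevA n w →
    G w = ∏ p ∈ Finset.filter
        (fun p : ℕ × ℕ => 1 ≤ p.1 ∧ 1 ≤ p.2 ∧ p.1 + p.2 ≤ n)
        (Finset.range (n+1) ×ˢ Finset.range (n+1)),
      (xV p.1 + yV p.2 + βM * xV p.1 * yV p.2)) ∧
  (∀ w : SPerm, IsAperm w → ∀ i : ℕ, 0 < i → w ((i : ℤ) + 1) < w (i : ℤ) →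
    (xV i - xV (i+1)) * G (w * st (i : ℤ)) =
      (1 + βM * xV (i+1)) * G w - (1 + βM * xV i) * swapXvar i (G w))

/-! ## Power series rings -/

/-- `ℤ[β]⟦z⟧`. -/
abbrev PS1 := MvPowerSeries ℕ PolyB
/-- `ℤ[β]⟦x;y⟧`: `Sum.inl i = x_i`, `Sum.inr i = y_i`. -/
abbrev PS2 := MvPowerSeries (ℕ ⊕ ℕ) PolyB
/-- `ℤ[β]⟦x;y;z⟧`: `Sum.inl i = x_i`, `Sum.inr (Sum.inl i) = y_i`,
`Sum.inr (Sum.inr i) = z_i`. -/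
abbrev PS3 := MvPowerSeries (ℕ ⊕ ℕ ⊕ ℕ) PolyB

/-- Renaming of variables of a formal power series along a (variable-to-
variable, injective) map `g`. -/
def renamePS {σ τ : Type} (g : σ → τ) (f : MvPowerSeries σ PolyB) :
    MvPowerSeries τ PolyB :=
  fun e => if h : ∃ d : σ →₀ ℕ, Finsupp.mapDomain g d = e then f h.choose else 0

/-- The substitution sending `z_{2i-1}` to `z_i` (first alphabet) and
`z_{2i}` to `z'_i` (second alphabet): evaluation at the disjoint union of two
alphabets. -/
def dblVar : ℕ → ℕ ⊕ ℕ := fun k => if k % 2 = 1 then Sum.inl ((k+1)/2) else Sum.inr (k/2)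

def toPS2 : MvP →+* PS2 := MvPolynomial.coeToMvPowerSeries.ringHom
def X2 (i : ℕ) : PS2 := MvPowerSeries.X (Sum.inl i)
def Y2 (i : ℕ) : PS2 := MvPowerSeries.X (Sum.inr i)
def βC2 : PS2 := @MvPowerSeries.C (ℕ ⊕ ℕ) PolyB _ Polynomial.X
/-- The inverse of `1 + β y_m` in `ℤ[β]⟦x;y⟧`. -/
def yInv2 (m : ℕ) : PS2 := MvPowerSeries.invOfUnit (1 + βC2 * Y2 m) 1

def X3 (i : ℕ) : PS3 := MvPowerSeries.X (Sum.inl i)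
def Y3 (i : ℕ) : PS3 := MvPowerSeries.X (Sum.inr (Sum.inl i))
def βC3 : PS3 := @MvPowerSeries.C (ℕ ⊕ ℕ ⊕ ℕ) PolyB _ Polynomial.X
/-- The inverse of `1 + β y_m` in `ℤ[β]⟦x;y;z⟧`. -/
def yInv3 (m : ℕ) : PS3 := MvPowerSeries.invOfUnit (1 + βC3 * Y3 m) 1

/-- `y_c` for `c : ℤ`, with the convention `y_{-m} = -y_m/(1+βy_m)`. -/
def y3Of (c : ℤ) : PS3 :=
  if 0 ≤ c then Y3 c.toNat else - Y3 (-c).toNat * yInv3 (-c).toNat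

/-- `(1 + β y_c)⁻¹` for `c : ℤ` (with the convention above for `c < 0`). -/
def oneByInv3 (c : ℤ) : PS3 := MvPowerSeries.invOfUnit (1 + βC3 * y3Of c) 1

/-! ## Kirillov–Naruse double Grothendieck polynomials -/

/-- `𝔊_σ(y)`: the `x`-variables replaced by `y`'s, the `y`-variables set
to `0`, inside `ℤ[β]⟦x;y;z⟧`. -/
def GyMap : MvP →+* PS3 :=
  MvPolynomial.eval₂Hom (@MvPowerSeries.C (ℕ ⊕ ℕ ⊕ ℕ) PolyB _)
    (fun s => match s with
      | Sum.inl i => Y3 i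
      | Sum.inr _ => 0)

/-- `𝔊_τ(x)`: the `y`-variables set to `0`, inside `ℤ[β]⟦x;y;z⟧`. -/
def GxMap : MvP →+* PS3 :=
  MvPolynomial.eval₂Hom (@MvPowerSeries.C (ℕ ⊕ ℕ ⊕ ℕ) PolyB _)
    (fun s => match s with
      | Sum.inl i => X3 i
      | Sum.inr _ => 0)

/-- Embedding of `ℤ[β]⟦z⟧` into `ℤ[β]⟦x;y;z⟧`. -/
def zEmb (f : PS1) : PS3 := renamePS (fun k => Sum.inr (Sum.inr k)) f

/-- `σ⁻¹ ∘ u ∘ τ = w` for the Demazure product of `W^X_∞` (computed by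
folding Hecke words for `u` and `τ` starting from `σ⁻¹`; the result does not
depend on the chosen words). -/
def DemTriple (X : XType) (sg u tu w : SPerm) : Prop :=
  ∃ lu lt : List ℤ, HeckeWord X u lu ∧ HeckeWord X tu lt ∧
    demFold X sg⁻¹ (lu ++ lt) = w

/-- The Kirillov–Naruse double Grothendieck polynomial
`𝔊^X_w(x;y;z) = Σ_{σ⁻¹∘u∘τ = w} β^{ℓ(σ)+ℓ^X(u)+ℓ(τ)-ℓ^X(w)} 𝔊_σ(y) F^X_u(z) 𝔊_τ(x)`,
defined coefficientwise (each coefficient receives finitely many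
contributions); it depends on a choice `G` of the family of type A double
Grothendieck polynomials. -/
def KN (X : XType) (G : SPerm → MvP) (w : SPerm) : PS3 :=
  fun e => ∑ᶠ (t : SPerm × SPerm × SPerm)
    (_ : IsAperm t.1 ∧ IsW X t.2.1 ∧ IsAperm t.2.2 ∧ DemTriple X t.1 t.2.1 t.2.2 w),
    @MvPowerSeries.coeff (ℕ ⊕ ℕ ⊕ ℕ) PolyB _ e
      (@MvPowerSeries.C (ℕ ⊕ ℕ ⊕ ℕ) PolyB _
          (Polynomial.X ^ (lenA t.1 + lenX X t.2.1 + lenA t.2.2 - lenX X w)) *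
        (GyMap (G t.1) * zEmb (KSF X t.2.1) * GxMap (G t.2.2)))

end

/-! ## Stable Grothendieck functions of type A -/

section

/-- A type A Hecke word: letters are positive, fold to `w` under the
Demazure product. -/
def HeckeWordA (w : SPerm) (l : List ℤ) : Prop :=
  (∀ a ∈ l, 0 < a) ∧ demFold XType.B 1 l = w

/-- `b ∈ C(a)`: compatible sequences of type A. -/
def CompatA (a : List ℤ) (b : List ℕ) : Prop :=
  b.length = a.length ∧ (∀ x ∈ b, 0 < x) ∧ b.Pairwise (· ≤ ·) ∧
  ∀ i : ℕ, i + 1 < a.length → a.getD i 0 ≤ a.getD (i+1) 0 →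
    b.getD i 0 < b.getD (i+1) 0

/-- The stable (symmetric) Grothendieck function `G_w(z)`. -/
def GA (w : SPerm) : PS1 :=
  fun d => ∑ᶠ (p : List ℤ × List ℕ)
    (_ : HeckeWordA w p.1 ∧ CompatA p.1 p.2 ∧ ∀ k : ℕ, d k = p.2.count k),
    (Polynomial.X : PolyB) ^ (p.1.length - lenA w)

/-- Demazure product condition `u ∘ v = w` in `S_∞`. -/
def DemPairA (u v w : SPerm) : Prop :=
  ∃ lv : List ℤ, HeckeWordA v lv ∧ demFold XType.B u lv = w

/-- `max({0} ∪ {i > 0 : u(i) ≠ i})`. -/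
def suppMax (u : SPerm) : ℕ := sSup {n : ℕ | 0 < n ∧ u (n : ℤ) ≠ (n : ℤ)}

end

/-! ## The coefficient ring 𝔸 (localization of ℤ[β][y] at the 1+βyᵢ) -/

section

/-- `ℤ[β][y_1,y_2,...]`. -/
abbrev Ry := MvPolynomial ℕ+ PolyB

/-- The multiplicative set generated by the `1 + β y_i`, `i ≥ 1`. -/
def Sy : Submonoid Ry :=
  Submonoid.closure
    (Set.range fun i : ℕ+ => (1 + MvPolynomial.C Polynomial.X * MvPolynomial.X i : Ry))

/-- The ring `𝔸`. -/
abbrev Aloc := Localization Sy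

/-- The polynomial ring `𝔸[x_1,x_2,...]`. -/
abbrev Ax := MvPolynomial ℕ+ Aloc

/-- The canonical map `ℤ[β][x;y] → 𝔸[x]`. -/
def toAx : MvP →+* Ax :=
  MvPolynomial.eval₂Hom
    ((MvPolynomial.C : Aloc →+* Ax).comp
      ((algebraMap Ry Aloc).comp (MvPolynomial.C : PolyB →+* Ry)))
    (fun s => match s with
      | Sum.inl i => if h : 0 < i then MvPolynomial.X (⟨i, h⟩ : ℕ+) else 0
      | Sum.inr i => if h : 0 < i then
          MvPolynomial.C (algebraMap Ry Aloc (MvPolynomial.X (⟨i, h⟩ : ℕ+))) else 0)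

/-- Homogeneity in `ℤ[β][y]` for the grading `deg β = -1`, `deg y_i = 1`. -/
def IsHomogRy (p : Ry) (d : ℤ) : Prop :=
  ∀ (m : ℕ+ →₀ ℕ) (a : ℕ), (MvPolynomial.coeff m p).coeff a ≠ 0 →
    (m.sum fun _ e => (e : ℤ)) - (a : ℤ) = d

/-- Homogeneity in `𝔸` of degree `d`: the element can be written with a
homogeneous numerator of degree `d` and a (degree zero) denominator in `Sy`. -/
def IsHomogA (x : Aloc) (d : ℤ) : Prop :=
  ∃ (p : Ry) (s : Sy), IsHomogRy p d ∧ IsHomogRy (s : Ry) 0 ∧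
    x * algebraMap Ry Aloc (s : Ry) = algebraMap Ry Aloc p

/-- The subring `𝔸^{(n)}` generated by `β`, by `y_1,…,y_{n-1}` and by the
inverses of `1+βy_1,…,1+βy_{n-1}`. -/
def AnSub (n : ℕ) : Subring Aloc :=
  Subring.closure
    ({algebraMap Ry Aloc (MvPolynomial.C Polynomial.X)} ∪
     {x | ∃ i : ℕ+, (i : ℕ) < n ∧ x = algebraMap Ry Aloc (MvPolynomial.X i)} ∪
     {x | ∃ i : ℕ+, (i : ℕ) < n ∧
        x * algebraMap Ry Aloc
          (1 + MvPolynomial.C Polynomial.X * MvPolynomial.X i : Ry) = 1})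

end

/-! ## Transition chains -/

section

/-- The list of reflections of a transition chain `γ = (δ; j_1 < ⋯ < j_r)`
with target column `k`: first (if `δ`) the reflection `t_{0,k}`, then the
reflections `t_{j_1,k}, …, t_{j_r,k}`. -/
def stepsR (k : ℕ) (γ : Bool × List ℤ) : List SPerm :=
  (if γ.1 then [tt 0 (k : ℤ)] else []) ++ γ.2.map (fun j => tt j (k : ℤ))

/-- Validity of the transition chain `γ = (δ; j_1 < ⋯ < j_r)` starting at
`w`, with target column `k`: `δ` only in type B, `j`'s increasing and `< k`,
`j_i ≠ -k`, `j_i ≠ 0` in type D, and each step increases `ℓ^X` by one. -/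
def chainValidR (X : XType) (w : SPerm) (k : ℕ) (γ : Bool × List ℤ) : Prop :=
  (γ.1 = true → X = XType.B) ∧ γ.2.Pairwise (· < ·) ∧
  (∀ j ∈ γ.2, j < (k : ℤ) ∧ j ≠ -(k : ℤ) ∧ (X = XType.D → j ≠ 0)) ∧
  IncSteps (lenX X) w (stepsR k γ)

/-- The endpoint of a chain. -/
def endR (w : SPerm) (k : ℕ) (γ : Bool × List ℤ) : SPerm := w * (stepsR k γ).prod

/-- The number of steps `δ + r` of a chain. -/
def lenR (γ : Bool × List ℤ) : ℕ := (if γ.1 then 1 else 0) + γ.2.length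

end

/-! ## Unimodal factorizations -/

section

/-- `b ∈ U(a)`: unimodal factorizations of the word `a`. -/
def UFact (a b : List ℤ) : Prop :=
  b.length = a.length ∧ (∀ x ∈ b, x ≠ 0) ∧
  b.Pairwise (fun m n => |m| < |n| ∨ (|m| = |n| ∧ m ≤ n)) ∧
  ∀ i : ℕ, i + 1 < b.length → b.getD i 0 = b.getD (i+1) 0 →
    (b.getD i 0 < 0 → |a.getD (i+1) 0| < |a.getD i 0|) ∧
    (0 < b.getD i 0 → |a.getD i 0| < |a.getD (i+1) 0|)

/-- `b ∈ U^X(a)`. -/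
def UFactX (X : XType) (a b : List ℤ) : Prop :=
  UFact a b ∧
  (X = XType.B → ∀ i : ℕ, i < b.length → a.getD i 0 = 0 → 0 < b.getD i 0) ∧
  (X = XType.D → ∀ i : ℕ, i < b.length →
    (a.getD i 0 = -1 ∨ a.getD i 0 = 1) → 0 < b.getD i 0)

end

/-! ## Reading words of skew shifted shapes -/

section

/-- The row-by-row reading word of the filling of `SD_{lam/mu}` placing
`j - i` in box `(i,j)`. -/
def aWord (lam mu : List ℕ) : List ℤ :=
  (List.range lam.length).flatMap (fun r =>
    (List.range (lam.getD r 0 - mu.getD r 0)).map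
      (fun s => ((mu.getD r 0 + s : ℕ) : ℤ)))

/-- The row-by-row reading word of the filling of `SD_{lam/mu}` placing
`j - i + 1` in each box `(i,j)` with `i ≠ j` and `(-1)^i` in each diagonal
box `(i,i)`. -/
def bWord (lam mu : List ℕ) : List ℤ :=
  (List.range lam.length).flatMap (fun r =>
    (List.range (lam.getD r 0 - mu.getD r 0)).map
      (fun s => if mu.getD r 0 + s = 0 then (-1 : ℤ) ^ (r + 1)
        else ((mu.getD r 0 + s : ℕ) : ℤ) + 1))

end

end

/-! ## Auxiliary development for `groth_span` -/

noncomputable section GrothSpanAux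

set_option maxSynthPendingDepth 5
set_option maxHeartbeats 1000000
set_option synthInstance.maxHeartbeats 400000

open Finset

/-- Positive natural from a natural (`0 ↦ 1`). -/
local notation "pn" => Nat.toPNat'

namespace GrothSpanAux

/-! ### Simple transpositions -/

lemma st_eq_swaps (k : ℕ) (hk : 0 < k) :
    st (k : ℤ) = Equiv.swap (k : ℤ) ((k : ℤ)+1) * Equiv.swap (-(k:ℤ)) (-((k:ℤ)+1)) := by
  have h1 : (k : ℤ) ≠ -1 := by omega
  have h2 : (k : ℤ) ≠ 0 := by omega
  have h3 : (k : ℤ) + 1 ≠ 0 := by omega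
  have h4 : ¬ ((k:ℤ) = (k:ℤ)+1 ∨ (k:ℤ) = -((k:ℤ)+1)) := by omega
  rw [st, if_neg h1, tt, if_neg h2, if_neg h3, if_neg h4]

lemma st_apply (k : ℕ) (hk : 0 < k) (x : ℤ) :
    st (k : ℤ) x =
      if x = (k:ℤ) then (k:ℤ)+1 else if x = (k:ℤ)+1 then (k:ℤ)
      else if x = -(k:ℤ) then -(k:ℤ)-1 else if x = -(k:ℤ)-1 then -(k:ℤ) else x := by
  rw [st_eq_swaps k hk]
  rw [Equiv.Perm.mul_apply]
  simp only [Equiv.swap_apply_def]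
  split_ifs <;> omega

lemma st_st (k : ℕ) (hk : 0 < k) (x : ℤ) : st (k:ℤ) (st (k:ℤ) x) = x := by
  rw [st_apply k hk, st_apply k hk]
  split_ifs <;> omega

lemma st_mul_st (k : ℕ) (hk : 0 < k) : st (k:ℤ) * st (k:ℤ) = 1 := by
  ext x
  simp [Equiv.Perm.mul_apply, st_st k hk]

lemma mul_st_st (w : SPerm) (k : ℕ) (hk : 0 < k) : w * st (k:ℤ) * st (k:ℤ) = w := by
  rw [mul_assoc, st_mul_st k hk, mul_one]

lemma st_neg (k : ℕ) (hk : 0 < k) (x : ℤ) : st (k:ℤ) (-x) = -(st (k:ℤ) x) := by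
  rw [st_apply k hk, st_apply k hk]
  split_ifs <;> omega

lemma st_pos (k : ℕ) (hk : 0 < k) (x : ℤ) (hx : 0 < x) : 0 < st (k:ℤ) x := by
  rw [st_apply k hk]
  split_ifs <;> omega

/-! ### A-permutations -/

lemma isAperm_one : IsAperm 1 := by
  refine ⟨⟨fun i => rfl, ?_⟩, fun i hi => hi⟩
  simp [Set.finite_empty]

lemma isAperm_mul_st {v : SPerm} (hv : IsAperm v) (k : ℕ) (hk : 0 < k) :
    IsAperm (v * st (k:ℤ)) := by
  obtain ⟨⟨hneg, hfin⟩, hpos⟩ := hv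
  refine ⟨⟨?_, ?_⟩, ?_⟩
  · intro i
    simp only [Equiv.Perm.mul_apply]
    rw [st_neg k hk, hneg]
  · apply Set.Finite.subset (Set.Finite.union hfin
      (Set.finite_Icc (-(k:ℤ)-1) ((k:ℤ)+1)))
    intro x hx
    simp only [Set.mem_setOf_eq, Equiv.Perm.mul_apply] at hx
    by_cases h : st (k:ℤ) x = x
    · left; rw [h] at hx; exact hx
    · right
      simp only [Set.mem_Icc]
      rw [st_apply k hk] at h
      by_contra hc
      apply h
      split_ifs <;> omega
  · intro i hi
    simp only [Equiv.Perm.mul_apply]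
    exact hpos _ (st_pos k hk i hi)

/-- A bound outside of which a permutation with finite support is the identity. -/
lemma exists_bound {v : SPerm} (hv : IsAperm v) :
    ∃ N : ℕ, ∀ x : ℤ, (N : ℤ) < |x| → v x = x := by
  obtain ⟨⟨_, hfin⟩, _⟩ := hv
  refine ⟨hfin.toFinset.sup Int.natAbs, fun x hx => ?_⟩
  by_contra h
  have hm : x ∈ hfin.toFinset := by simpa using h
  have := Finset.le_sup (f := Int.natAbs) hm
  rw [Int.abs_eq_natAbs] at hx
  omega

/-! ### The reverse permutation -/

def revFun (N : ℕ) (x : ℤ) : ℤ :=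
  if 1 ≤ x ∧ x ≤ (N:ℤ) then (N:ℤ)+1-x
  else if -(N:ℤ) ≤ x ∧ x ≤ -1 then -(N:ℤ)-1-x else x

lemma revFun_invol (N : ℕ) (x : ℤ) : revFun N (revFun N x) = x := by
  unfold revFun
  split_ifs <;> omega

def revP (N : ℕ) : SPerm :=
  ⟨revFun N, revFun N, revFun_invol N, revFun_invol N⟩

lemma revP_apply (N : ℕ) (x : ℤ) : revP N x = revFun N x := rfl

lemma isAperm_revP (N : ℕ) : IsAperm (revP N) := by
  refine ⟨⟨?_, ?_⟩, ?_⟩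
  · intro i
    rw [revP_apply, revP_apply]
    unfold revFun
    split_ifs <;> omega
  · apply Set.Finite.subset (Set.finite_Icc (-(N:ℤ)) (N:ℤ))
    intro x hx
    simp only [Set.mem_setOf_eq, revP_apply] at hx
    simp only [Set.mem_Icc]
    unfold revFun at hx
    by_contra hc
    apply hx
    split_ifs <;> omega
  · intro i hi
    rw [revP_apply]
    unfold revFun
    split_ifs <;> omega

lemma isRevA_revP (N : ℕ) : IsRevA N (revP N) := by
  refine ⟨isAperm_revP N, fun i h1 h2 => ?_, fun i hi => ?_⟩
  · rw [revP_apply]; unfold revFun; split_ifs <;> omega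
  · rw [revP_apply]; unfold revFun; split_ifs <;> omega

lemma isRevA_one : IsRevA 0 1 := by
  refine ⟨isAperm_one, fun i h1 h2 => by omega, fun i hi => rfl⟩

end GrothSpanAux


namespace GrothSpanAux

/-! ### Inversions -/

/-- Inversions of `v` among positions `1..N`. -/
def invF (N : ℕ) (v : SPerm) : Finset (ℤ × ℤ) :=
  (Finset.Icc (1:ℤ) (N:ℤ) ×ˢ Finset.Icc (1:ℤ) (N:ℤ)).filter
    (fun p => p.1 < p.2 ∧ v p.2 < v p.1)

lemma invF_card_le (N : ℕ) (v : SPerm) :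
    (invF N v).card ≤ (Finset.Icc (1:ℤ) (N:ℤ) ×ˢ Finset.Icc (1:ℤ) (N:ℤ)).card :=
  Finset.card_le_card (Finset.filter_subset _ _)

lemma invF_grow {N k : ℕ} {v : SPerm} (hk : 1 ≤ k) (hkN : k + 1 ≤ N)
    (hasc : v (k:ℤ) < v ((k:ℤ)+1)) :
    (invF N v).card < (invF N (v * st (k:ℤ))).card := by
  classical
  set f : ℤ × ℤ → ℤ × ℤ := fun p => (st (k:ℤ) p.1, st (k:ℤ) p.2) with hf
  have hmapsto : ∀ p ∈ invF N v, f p ∈ invF N (v * st (k:ℤ)) := by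
    intro p hp
    simp only [invF, Finset.mem_filter, Finset.mem_product, Finset.mem_Icc] at hp ⊢
    obtain ⟨⟨⟨h11, h12⟩, h21, h22⟩, hlt, hinv⟩ := hp
    have hne : ¬(p.1 = (k:ℤ) ∧ p.2 = (k:ℤ)+1) := by
      rintro ⟨e1, e2⟩
      rw [e1, e2] at hinv
      omega
    refine ⟨⟨⟨?_, ?_⟩, ?_, ?_⟩, ?_, ?_⟩
    · show (1:ℤ) ≤ st (k:ℤ) p.1
      rw [st_apply k (by omega)]; split_ifs <;> omega
    · show st (k:ℤ) p.1 ≤ (N:ℤ)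
      rw [st_apply k (by omega)]; split_ifs <;> omega
    · show (1:ℤ) ≤ st (k:ℤ) p.2
      rw [st_apply k (by omega)]; split_ifs <;> omega
    · show st (k:ℤ) p.2 ≤ (N:ℤ)
      rw [st_apply k (by omega)]; split_ifs <;> omega
    · show st (k:ℤ) p.1 < st (k:ℤ) p.2
      rw [st_apply k (by omega), st_apply k (by omega)]
      split_ifs <;> omega
    · show (v * st (k:ℤ)) (st (k:ℤ) p.2) < (v * st (k:ℤ)) (st (k:ℤ) p.1)
      simp only [Equiv.Perm.mul_apply, st_st k (by omega : 0 < k)]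
      exact hinv
  have hinj : Set.InjOn f (invF N v) := by
    intro p _ q _ hpq
    have h1 : st (k:ℤ) (f p).1 = st (k:ℤ) (f q).1 := by rw [hpq]
    have h2 : st (k:ℤ) (f p).2 = st (k:ℤ) (f q).2 := by rw [hpq]
    simp only [hf, st_st k (by omega : 0 < k)] at h1 h2
    exact Prod.ext h1 h2
  have hmem : ((k:ℤ), (k:ℤ)+1) ∈ invF N (v * st (k:ℤ)) := by
    simp only [invF, Finset.mem_filter, Finset.mem_product, Finset.mem_Icc,
      Equiv.Perm.mul_apply]
    have e1 : st (k:ℤ) (k:ℤ) = (k:ℤ)+1 := by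
      rw [st_apply k (by omega)]; split_ifs <;> omega
    have e2 : st (k:ℤ) ((k:ℤ)+1) = (k:ℤ) := by
      rw [st_apply k (by omega)]; split_ifs <;> omega
    refine Finset.mem_filter.mpr ?_
    simp only [e1, e2, Finset.mem_product, Finset.mem_Icc]
    refine ⟨⟨⟨by omega, by omega⟩, by omega, by omega⟩, by omega, hasc⟩
  have hnotmem : ((k:ℤ), (k:ℤ)+1) ∉ (invF N v).image f := by
    intro hcon
    obtain ⟨p, hp, hfp⟩ := Finset.mem_image.mp hcon
    simp only [invF, Finset.mem_filter, Finset.mem_product, Finset.mem_Icc] at hp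
    have h1 : st (k:ℤ) p.1 = (k:ℤ) := congrArg Prod.fst hfp
    have h2 : st (k:ℤ) p.2 = (k:ℤ)+1 := congrArg Prod.snd hfp
    rw [st_apply k (by omega)] at h1 h2
    have : p.1 = (k:ℤ)+1 := by revert h1; split_ifs <;> omega
    have : p.2 = (k:ℤ) := by revert h2; split_ifs <;> omega
    omega
  have hsub : insert ((k:ℤ), (k:ℤ)+1) ((invF N v).image f) ⊆ invF N (v * st (k:ℤ)) := by
    intro x hx
    rcases Finset.mem_insert.mp hx with h | h
    · rw [h]; exact hmem
    · obtain ⟨p, hp, hfp⟩ := Finset.mem_image.mp h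
      rw [← hfp]; exact hmapsto p hp
  calc (invF N v).card = ((invF N v).image f).card := (Finset.card_image_of_injOn hinj).symm
    _ < (insert ((k:ℤ), (k:ℤ)+1) ((invF N v).image f)).card := by
        rw [Finset.card_insert_of_notMem hnotmem]; omega
    _ ≤ (invF N (v * st (k:ℤ))).card := Finset.card_le_card hsub

/-! ### Ascent or reverse -/

lemma eq_revP_of_no_ascent {N : ℕ} {v : SPerm} (hN : 1 ≤ N) (hv : IsAperm v)
    (hfix : ∀ x : ℤ, (N:ℤ) < |x| → v x = x)
    (hna : ∀ k : ℕ, 1 ≤ k → k + 1 ≤ N → v ((k:ℤ)+1) < v (k:ℤ)) :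
    v = revP N := by
  have hpos : ∀ x : ℤ, 0 < x → 0 < v x := hv.2
  -- v maps [1,N] into [1,N]
  have hmaps : ∀ x : ℤ, 1 ≤ x → x ≤ (N:ℤ) → 1 ≤ v x ∧ v x ≤ (N:ℤ) := by
    intro x h1 h2
    refine ⟨hpos x (by omega), ?_⟩
    by_contra h
    push_neg at h
    have hfx : v (v x) = v x := hfix (v x) (by
      have := hpos x (by omega); rw [abs_of_pos this]; omega)
    have := v.injective hfx
    omega
  -- strictly decreasing steps
  have hstep : ∀ x : ℤ, 1 ≤ x → x + 1 ≤ (N:ℤ) → v (x+1) < v x := by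
    intro x h1 h2
    have hx : x = ((x.toNat : ℕ) : ℤ) := by omega
    have := hna x.toNat (by omega) (by omega)
    rw [← hx] at this
    convert this using 2 <;> omega
  -- decreasing over distances
  have hdec : ∀ d : ℕ, ∀ x : ℤ, 1 ≤ x → x + d ≤ (N:ℤ) → v (x + d) + d ≤ v x := by
    intro d
    induction d with
    | zero => intro x h1 h2; simp
    | succ n ih =>
      intro x h1 h2
      have h3 := ih x h1 (by omega)
      have h4 := hstep (x + n) (by omega) (by push_cast; omega)
      push_cast at h2 ⊢
      have : x + n + 1 = x + (n + 1 : ℤ) := by ring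
      rw [← this]
      omega
  -- exact values on [1, N]
  have hval : ∀ x : ℤ, 1 ≤ x → x ≤ (N:ℤ) → v x = (N:ℤ) + 1 - x := by
    intro x h1 h2
    have hub : v x ≤ (N:ℤ) + 1 - x := by
      have hd : (1:ℤ) + ((x - 1).toNat : ℤ) = x := by omega
      have := hdec (x-1).toNat 1 (by omega) (by omega)
      rw [hd] at this
      have hv1 := hmaps 1 (by omega) (by omega)
      omega
    have hlb : (N:ℤ) + 1 - x ≤ v x := by
      have hd : x + ((N - x).toNat : ℤ) = (N:ℤ) := by omega
      have := hdec (N-x).toNat x (by omega) (by omega)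
      rw [hd] at this
      have hvN := hmaps N (by omega) (by omega)
      omega
    omega
  -- conclude
  have hzero : v 0 = 0 := by
    have := hv.1.1 0
    simp at this
    omega
  ext x
  rw [revP_apply]
  unfold revFun
  rcases lt_trichotomy x 0 with hx | hx | hx
  · rcases le_or_gt (-(N:ℤ)) x with hx2 | hx2
    · have := hv.1.1 (-x)
      simp only [neg_neg] at this
      have hvx := hval (-x) (by omega) (by omega)
      rw [hvx] at this
      split_ifs <;> omega
    · have := hfix x (by rw [abs_of_neg hx]; omega)
      split_ifs <;> omega
  · subst hx; split_ifs <;> omega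
  · rcases le_or_gt x (N:ℤ) with hx2 | hx2
    · have := hval x (by omega) hx2
      split_ifs <;> omega
    · have := hfix x (by rw [abs_of_pos hx]; omega)
      split_ifs <;> omega

end GrothSpanAux

namespace GrothSpanAux

/-! ### Algebra infrastructure on `Ax` -/

open MvPolynomial

/-- `β` as an element of `𝔸`. -/
def bA : Aloc := algebraMap Ry Aloc (MvPolynomial.C Polynomial.X)

/-- `y_q` as an element of `𝔸`. -/
def yA (q : ℕ+) : Aloc := algebraMap Ry Aloc (MvPolynomial.X q)

lemma Sy_le_nonZeroDivisors : Sy ≤ nonZeroDivisors Ry := by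
  rw [Sy, Submonoid.closure_le]
  rintro x ⟨i, rfl⟩
  refine mem_nonZeroDivisors_of_ne_zero ?_
  intro h
  have := congrArg (MvPolynomial.coeff 0) h
  simp [MvPolynomial.coeff_zero, MvPolynomial.coeff_X'] at this

instance : IsDomain Aloc := IsLocalization.isDomain_localization Sy_le_nonZeroDivisors

lemma pnat_coe_add_one (q : ℕ+) : ((q + 1 : ℕ+) : ℕ) = (q : ℕ) + 1 := rfl

lemma pnat_succ_ne (q : ℕ+) : q ≠ q + 1 := by
  intro h
  have := congrArg (fun x : ℕ+ => (x : ℕ)) h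
  simp [pnat_coe_add_one] at this

lemma X_sub_X_ne_zero (q : ℕ+) :
    ((MvPolynomial.X q : Ax) - (MvPolynomial.X (q+1) : Ax)) ≠ (0 : Ax) :=
  sub_ne_zero_of_ne (fun h => pnat_succ_ne q (MvPolynomial.X_injective h))

lemma toAx_C (p : PolyB) :
    toAx (MvPolynomial.C p) = MvPolynomial.C (algebraMap Ry Aloc (MvPolynomial.C p)) := by
  simp [toAx]

lemma toAx_X_inl (q : ℕ+) :
    toAx (MvPolynomial.X (Sum.inl (q:ℕ) : ℕ ⊕ ℕ)) = MvPolynomial.X q := by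
  rw [toAx, MvPolynomial.eval₂Hom_X']
  show (if h : 0 < (q:ℕ) then MvPolynomial.X (⟨(q:ℕ), h⟩ : ℕ+) else 0) = _
  rw [dif_pos q.pos]
  exact congrArg MvPolynomial.X (Subtype.coe_eta q q.pos)

lemma toAx_X_inl_zero : toAx (MvPolynomial.X (Sum.inl 0 : ℕ ⊕ ℕ)) = 0 := by
  rw [toAx, MvPolynomial.eval₂Hom_X']
  show (if h : 0 < 0 then MvPolynomial.X (⟨0, h⟩ : ℕ+) else 0) = _
  rw [dif_neg (by omega)]
  rfl

lemma toAx_X_inr (q : ℕ+) :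
    toAx (MvPolynomial.X (Sum.inr (q:ℕ) : ℕ ⊕ ℕ)) = MvPolynomial.C (yA q) := by
  rw [toAx, MvPolynomial.eval₂Hom_X']
  show (if h : 0 < (q:ℕ) then
      MvPolynomial.C (algebraMap Ry Aloc (MvPolynomial.X (⟨(q:ℕ), h⟩ : ℕ+))) else 0) = _
  rw [dif_pos q.pos, yA]
  exact congrArg _ (congrArg _ (congrArg MvPolynomial.X (Subtype.coe_eta q q.pos)))

lemma toAx_X_inr_zero : toAx (MvPolynomial.X (Sum.inr 0 : ℕ ⊕ ℕ)) = 0 := by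
  rw [toAx, MvPolynomial.eval₂Hom_X']
  show (if h : 0 < 0 then
      MvPolynomial.C (algebraMap Ry Aloc (MvPolynomial.X (⟨0, h⟩ : ℕ+))) else 0) = _
  rw [dif_neg (by omega)]

lemma toAx_xV (q : ℕ+) : toAx (xV (q : ℕ)) = MvPolynomial.X q := toAx_X_inl q

lemma toAx_yV (q : ℕ+) : toAx (yV (q : ℕ)) = MvPolynomial.C (yA q) := toAx_X_inr q

lemma toAx_beta : toAx βM = MvPolynomial.C bA := by
  rw [βM, toAx_C, bA]

/-- The exchange of `x`-variables `q`, `q+1` on `Ax`. -/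
def swA (q : ℕ+) : Ax →ₐ[Aloc] Ax := MvPolynomial.rename (Equiv.swap q (q+1))

lemma swA_X_left (q : ℕ+) : swA q (MvPolynomial.X q) = MvPolynomial.X (q+1) := by
  simp [swA, MvPolynomial.rename_X]

lemma swA_X_right (q : ℕ+) : swA q (MvPolynomial.X (q+1)) = MvPolynomial.X q := by
  simp [swA, MvPolynomial.rename_X]

lemma swA_X_other (q m : ℕ+) (h1 : m ≠ q) (h2 : m ≠ q + 1) :
    swA q (MvPolynomial.X m) = MvPolynomial.X m := by
  simp [swA, MvPolynomial.rename_X, Equiv.swap_apply_of_ne_of_ne h1 h2]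

lemma swA_C (q : ℕ+) (a : Aloc) : swA q (MvPolynomial.C a) = MvPolynomial.C a := by
  simp [swA, MvPolynomial.rename_C]

lemma swA_swA (q : ℕ+) (f : Ax) : swA q (swA q f) = f := by
  show (MvPolynomial.rename _) ((MvPolynomial.rename _) f) = f
  rw [MvPolynomial.rename_rename]
  have : ((Equiv.swap q (q+1) : ℕ+ → ℕ+) ∘ (Equiv.swap q (q+1) : ℕ+ → ℕ+)) = id := by
    funext x
    simp [Equiv.swap_apply_self]
  rw [this, MvPolynomial.rename_id]
  rfl

lemma toAx_swapXvar (q : ℕ+) (f : MvP) :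
    toAx (swapXvar (q : ℕ) f) = swA q (toAx f) := by
  have hq1 : ((q:ℕ)+1) = ((q+1 : ℕ+) : ℕ) := rfl
  have hcomp : toAx.comp (MvPolynomial.rename
        (Equiv.swap (Sum.inl (q:ℕ) : ℕ ⊕ ℕ) (Sum.inl ((q:ℕ)+1)))).toRingHom
      = (swA q).toRingHom.comp toAx := by
    apply MvPolynomial.ringHom_ext
    · intro a
      simp only [RingHom.comp_apply, AlgHom.toRingHom_eq_coe, RingHom.coe_coe,
        MvPolynomial.rename_C]
      rw [toAx_C, swA_C]
    · intro i
      simp only [RingHom.comp_apply, AlgHom.toRingHom_eq_coe, RingHom.coe_coe,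
        MvPolynomial.rename_X]
      rcases i with m | m
      · by_cases e1 : m = (q:ℕ)
        · subst e1
          have e : (Equiv.swap (Sum.inl (q:ℕ) : ℕ ⊕ ℕ) (Sum.inl ((q:ℕ)+1)))
              (Sum.inl (q:ℕ)) = Sum.inl ((q:ℕ)+1) := Equiv.swap_apply_left _ _
          rw [e, hq1, toAx_X_inl, toAx_X_inl, swA_X_left]
        · by_cases e2 : m = (q:ℕ)+1
          · subst e2
            have e : (Equiv.swap (Sum.inl (q:ℕ) : ℕ ⊕ ℕ) (Sum.inl ((q:ℕ)+1)))
                (Sum.inl ((q:ℕ)+1)) = Sum.inl (q:ℕ) := Equiv.swap_apply_right _ _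
            rw [e, hq1, toAx_X_inl, toAx_X_inl, swA_X_right]
          · have e : (Equiv.swap (Sum.inl (q:ℕ) : ℕ ⊕ ℕ) (Sum.inl ((q:ℕ)+1)))
                (Sum.inl m) = Sum.inl m :=
              Equiv.swap_apply_of_ne_of_ne
                (fun h => e1 (Sum.inl_injective h))
                (fun h => e2 (Sum.inl_injective h))
            rw [e]
            rcases Nat.eq_zero_or_pos m with h0 | hm
            · subst h0
              rw [toAx_X_inl_zero, map_zero]
            · have t1 : toAx (MvPolynomial.X (Sum.inl m : ℕ ⊕ ℕ))
                  = (MvPolynomial.X (⟨m, hm⟩ : ℕ+) : Ax) := toAx_X_inl ⟨m, hm⟩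
              rw [t1, swA_X_other q ⟨m, hm⟩
                (fun h => e1 (by
                  have := congrArg (fun x : ℕ+ => (x:ℕ)) h
                  simpa using this))
                (fun h => e2 (by
                  have := congrArg (fun x : ℕ+ => (x:ℕ)) h
                  simpa [pnat_coe_add_one] using this))]
      · have e : (Equiv.swap (Sum.inl (q:ℕ) : ℕ ⊕ ℕ) (Sum.inl ((q:ℕ)+1)))
            (Sum.inr m) = Sum.inr m :=
          Equiv.swap_apply_of_ne_of_ne (by simp) (by simp)
        rw [e]
        rcases Nat.eq_zero_or_pos m with h0 | hm
        · subst h0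
          rw [toAx_X_inr_zero, map_zero]
        · have t2 : toAx (MvPolynomial.X (Sum.inr m : ℕ ⊕ ℕ))
              = MvPolynomial.C (yA ⟨m, hm⟩) := toAx_X_inr ⟨m, hm⟩
          rw [t2, swA_C]
  have := congrArg (fun g => g f) hcomp
  simpa [swapXvar] using this

end GrothSpanAux

namespace GrothSpanAux

open MvPolynomial

lemma toAx_xV_succ (q : ℕ+) : toAx (xV ((q:ℕ)+1)) = MvPolynomial.X (q+1) :=
  toAx_xV (q+1)

lemma st_apply_self (k : ℕ) (hk : 0 < k) : st (k:ℤ) (k:ℤ) = (k:ℤ)+1 := by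
  rw [st_apply k hk]; split_ifs <;> omega

lemma st_apply_succ (k : ℕ) (hk : 0 < k) : st (k:ℤ) ((k:ℤ)+1) = (k:ℤ) := by
  rw [st_apply k hk]; split_ifs <;> omega

variable (G : SPerm → MvP)

/-- The `𝔸`-span of the double Grothendieck polynomials. -/
def WG : Submodule Aloc Ax :=
  Submodule.span Aloc {P : Ax | ∃ w : SPerm, IsAperm w ∧ P = toAx (G w)}

lemma mem_WG {w : SPerm} (hw : IsAperm w) : toAx (G w) ∈ WG G :=
  Submodule.subset_span ⟨w, hw, rfl⟩

variable {G}

/-- The divided difference equation, mapped to `Ax`. -/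
lemma EAx (hG : GrothFamily G) {u : SPerm} (hu : IsAperm u) (q : ℕ+)
    (hdesc : u ((((q:ℕ):ℤ))+1) < u (((q:ℕ):ℤ))) :
    (MvPolynomial.X q - MvPolynomial.X (q+1)) * toAx (G (u * st ((q:ℕ):ℤ)))
      = (1 + MvPolynomial.C bA * MvPolynomial.X (q+1)) * toAx (G u)
        - (1 + MvPolynomial.C bA * MvPolynomial.X q) * swA q (toAx (G u)) := by
  have h := hG.2 u hu (q:ℕ) q.pos hdesc
  have h2 := congrArg toAx h
  simp only [map_mul, map_sub, map_add, map_one] at h2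
  rw [toAx_xV q, toAx_xV_succ q, toAx_beta, toAx_swapXvar q] at h2
  exact h2

/-- Symmetry of `𝔊_u` in `x_q, x_{q+1}` when `u` has an ascent at `q`. -/
lemma swA_eq_self (hG : GrothFamily G) {u : SPerm} (hu : IsAperm u) (q : ℕ+)
    (hasc : u (((q:ℕ):ℤ)) < u ((((q:ℕ):ℤ))+1)) :
    swA q (toAx (G u)) = toAx (G u) := by
  set zq : ℤ := ((q:ℕ):ℤ) with hzq
  have hu' : IsAperm (u * st zq) := isAperm_mul_st hu (q:ℕ) q.pos
  have hdesc' : (u * st zq) (zq+1) < (u * st zq) zq := by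
    simp only [Equiv.Perm.mul_apply]
    rw [st_apply_self (q:ℕ) q.pos, st_apply_succ (q:ℕ) q.pos]
    exact hasc
  have E := EAx hG hu' q hdesc'
  rw [mul_st_st u (q:ℕ) q.pos] at E
  have E2 := congrArg (swA q) E
  simp only [map_mul, map_sub, map_add, map_one] at E2
  rw [swA_X_left, swA_X_right, swA_C, swA_swA] at E2
  -- E2 : (X (q+1) - X q) * swA q (toAx (G u)) = (1 + C bA * X q) * toAx (G (u * st zq))
  --        - (1 + C bA * X (q+1)) * (toAx (G (u * st zq)))  ... careful, recompute
  have E3 : (MvPolynomial.X q - MvPolynomial.X (q+1)) * swA q (toAx (G u))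
      = (MvPolynomial.X q - MvPolynomial.X (q+1)) * toAx (G u) := by
    linear_combination (-1 : Ax) * E2 - E
  exact mul_left_cancel₀ (X_sub_X_ne_zero q) E3

/-- Stability of the span under the Demazure operator, in divisibility-free form. -/
lemma stab (hG : GrothFamily G) (q : ℕ+) {f : Ax} (hf : f ∈ WG G) :
    ∃ g ∈ WG G,
      (MvPolynomial.X q - MvPolynomial.X (q+1)) * g
        = (1 + MvPolynomial.C bA * MvPolynomial.X (q+1)) * f
          - (1 + MvPolynomial.C bA * MvPolynomial.X q) * swA q f := by
  induction hf using Submodule.span_induction with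
  | mem x hx =>
    obtain ⟨u, hu, rfl⟩ := hx
    set zq : ℤ := ((q:ℕ):ℤ) with hzq
    rcases lt_trichotomy (u (zq+1)) (u zq) with hlt | heq | hgt
    · exact ⟨toAx (G (u * st zq)), mem_WG G (isAperm_mul_st hu (q:ℕ) q.pos),
        EAx hG hu q hlt⟩
    · exact absurd (u.injective heq) (by omega)
    · refine ⟨(-bA) • toAx (G u), Submodule.smul_mem _ _ (mem_WG G hu), ?_⟩
      rw [swA_eq_self hG hu q hgt, smul_eq_C_mul, map_neg]
      ring
  | zero => exact ⟨0, Submodule.zero_mem _, by simp⟩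
  | add x y hx hy ihx ihy =>
    obtain ⟨g1, hg1, e1⟩ := ihx
    obtain ⟨g2, hg2, e2⟩ := ihy
    refine ⟨g1 + g2, Submodule.add_mem _ hg1 hg2, ?_⟩
    rw [map_add]
    linear_combination e1 + e2
  | smul a x hx ihx =>
    obtain ⟨g, hg, e⟩ := ihx
    refine ⟨a • g, Submodule.smul_mem _ _ hg, ?_⟩
    rw [map_smul, smul_eq_C_mul, smul_eq_C_mul, smul_eq_C_mul]
    linear_combination (MvPolynomial.C a) * e

end GrothSpanAux

namespace GrothSpanAux

open MvPolynomial Finset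

lemma pn_coe {i : ℕ} (hi : 0 < i) : ((Nat.toPNat' i : ℕ+) : ℕ) = i := by
  rw [Nat.toPNat'_coe, if_pos hi]

lemma pn_coe_pnat (q : ℕ+) : Nat.toPNat' (q:ℕ) = q := by
  apply PNat.coe_injective
  rw [pn_coe q.pos]

lemma pn_succ {j : ℕ} (hj : 0 < j) : Nat.toPNat' (j+1) = Nat.toPNat' j + 1 := by
  apply PNat.coe_injective
  rw [pn_coe (by omega)]
  rw [pnat_coe_add_one, pn_coe hj]

/-- The factor `x_i ⊕ y_j`. -/
def facA (i j : ℕ+) : Ax :=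
  MvPolynomial.X i + MvPolynomial.C (yA j)
    + MvPolynomial.C bA * MvPolynomial.X i * MvPolynomial.C (yA j)

lemma toAx_fac (i j : ℕ+) :
    toAx (xV (i:ℕ) + yV (j:ℕ) + βM * xV (i:ℕ) * yV (j:ℕ)) = facA i j := by
  simp only [map_add, map_mul, toAx_xV, toAx_yV, toAx_beta, facA]

/-- Row `i` of depth `c` of a shape product. -/
def rowA (i : ℕ+) (c : ℕ) : Ax := ∏ j ∈ Finset.Icc 1 c, facA i (Nat.toPNat' j)

/-- The product `∏_{(i,j) ∈ shape ρ} (x_i ⊕ y_j)` over rows `1..n`. -/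
def PRshape (n : ℕ) (ρ : ℕ → ℕ) : Ax :=
  ∏ i ∈ Finset.Icc 1 n, rowA (Nat.toPNat' i) (ρ i)

lemma rowA_zero (i : ℕ+) : rowA i 0 = 1 := by
  simp [rowA]

lemma rowA_succ (i : ℕ+) (c : ℕ) :
    rowA i (c+1) = rowA i c * facA i (Nat.toPNat' (c+1)) := by
  rw [rowA, rowA, Finset.prod_Icc_succ_top (by omega : 1 ≤ c + 1)]

lemma PR_congr {n : ℕ} {ρ1 ρ2 : ℕ → ℕ} (h : ∀ i, 1 ≤ i → i ≤ n → ρ1 i = ρ2 i) :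
    PRshape n ρ1 = PRshape n ρ2 := by
  apply Finset.prod_congr rfl
  intro i hi
  rw [Finset.mem_Icc] at hi
  rw [h i hi.1 hi.2]

/-- Conversion of the staircase product from the hypothesis form. -/
lemma G_rev_eq {G : SPerm → MvP} (hG : GrothFamily G) (N : ℕ) :
    toAx (G (revP N)) = PRshape N (fun i => N - i) := by
  rw [hG.1 N (revP N) (isRevA_revP N), map_prod]
  have hset : Finset.filter
      (fun p : ℕ × ℕ => 1 ≤ p.1 ∧ 1 ≤ p.2 ∧ p.1 + p.2 ≤ N)
      (Finset.range (N+1) ×ˢ Finset.range (N+1))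
      = (Finset.Icc 1 N).biUnion (fun i => {i} ×ˢ Finset.Icc 1 (N - i)) := by
    ext p
    simp only [Finset.mem_filter, Finset.mem_product, Finset.mem_range,
      Finset.mem_biUnion, Finset.mem_Icc, Finset.mem_singleton]
    constructor
    · rintro ⟨⟨hp1, hp2⟩, h1, h2, h3⟩
      exact ⟨p.1, ⟨h1, by omega⟩, rfl, h2, by omega⟩
    · rintro ⟨i, ⟨hi1, hi2⟩, he, h1, h2⟩
      refine ⟨⟨by omega, by omega⟩, by omega, h1, by omega⟩
  rw [hset]
  rw [Finset.prod_biUnion]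
  · apply Finset.prod_congr rfl
    intro i hi
    rw [Finset.mem_Icc] at hi
    rw [Finset.singleton_product, Finset.prod_map]
    unfold rowA
    apply Finset.prod_congr rfl
    intro j hj
    rw [Finset.mem_Icc] at hj
    show toAx (xV i + yV j + βM * xV i * yV j) = _
    have hi' : i = ((Nat.toPNat' i : ℕ+) : ℕ) := (pn_coe (by omega)).symm
    have hj' : j = ((Nat.toPNat' j : ℕ+) : ℕ) := (pn_coe (by omega)).symm
    conv_lhs => rw [hi', hj']
    exact toAx_fac _ _
  · intro x hx y hy hxy
    simp only [Finset.mem_coe] at hx hy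
    apply Finset.disjoint_left.mpr
    intro p hp hq
    rw [Finset.mem_product, Finset.mem_singleton] at hp hq
    exact hxy (hp.1 ▸ hq.1 ▸ rfl)

lemma keyfac (q : ℕ+) (c : ℕ+) :
    (MvPolynomial.X q : Ax) - MvPolynomial.X (q+1)
      = (1 + MvPolynomial.C bA * MvPolynomial.X (q+1)) * facA q c
        - (1 + MvPolynomial.C bA * MvPolynomial.X q) * facA (q+1) c := by
  unfold facA
  ring

lemma swA_facA_other (q m : ℕ+) (j : ℕ+) (h1 : m ≠ q) (h2 : m ≠ q + 1) :
    swA q (facA m j) = facA m j := by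
  simp only [facA, map_add, map_mul, swA_C, swA_X_other q m h1 h2]

lemma swA_facA_left (q : ℕ+) (j : ℕ+) : swA q (facA q j) = facA (q+1) j := by
  simp only [facA, map_add, map_mul, swA_C, swA_X_left]

lemma swA_facA_right (q : ℕ+) (j : ℕ+) : swA q (facA (q+1) j) = facA q j := by
  simp only [facA, map_add, map_mul, swA_C, swA_X_right]

lemma swA_rowA_other (q m : ℕ+) (c : ℕ) (h1 : m ≠ q) (h2 : m ≠ q + 1) :
    swA q (rowA m c) = rowA m c := by
  rw [rowA, map_prod]
  exact Finset.prod_congr rfl (fun j _ => swA_facA_other q m _ h1 h2)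

lemma swA_rowA_left (q : ℕ+) (c : ℕ) : swA q (rowA q c) = rowA (q+1) c := by
  rw [rowA, map_prod, rowA]
  exact Finset.prod_congr rfl (fun j _ => swA_facA_left q _)

lemma swA_rowA_right (q : ℕ+) (c : ℕ) : swA q (rowA (q+1) c) = rowA q c := by
  rw [rowA, map_prod, rowA]
  exact Finset.prod_congr rfl (fun j _ => swA_facA_right q _)

lemma PR_split (n : ℕ) (ρ : ℕ → ℕ) (j : ℕ) (hj : 1 ≤ j) (hjn : j + 1 ≤ n) :
    PRshape n ρ = rowA (Nat.toPNat' j) (ρ j) * rowA (Nat.toPNat' (j+1)) (ρ (j+1)) *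
      ∏ i ∈ ((Finset.Icc 1 n).erase j).erase (j+1), rowA (Nat.toPNat' i) (ρ i) := by
  have hmem1 : j ∈ Finset.Icc 1 n := by rw [Finset.mem_Icc]; omega
  have hmem2 : j + 1 ∈ (Finset.Icc 1 n).erase j := by
    rw [Finset.mem_erase, Finset.mem_Icc]; omega
  rw [PRshape, ← Finset.mul_prod_erase _ _ hmem1, ← Finset.mul_prod_erase _ _ hmem2]
  ring

/-- A step of the chain: removing one box. -/
lemma chain_step {G : SPerm → MvP} (hG : GrothFamily G) {u : SPerm} (hu : IsAperm u)
    {n : ℕ} {ρ : ℕ → ℕ} (q : ℕ+) (hjn : (q:ℕ) + 1 ≤ n)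
    (hdesc : u ((((q:ℕ):ℤ))+1) < u (((q:ℕ):ℤ)))
    (hρ : ρ (q:ℕ) = ρ ((q:ℕ)+1) + 1)
    (hTG : toAx (G u) = PRshape n ρ) :
    toAx (G (u * st ((q:ℕ):ℤ)))
      = PRshape n (Function.update ρ (q:ℕ) (ρ ((q:ℕ)+1))) := by
  set c : ℕ := ρ ((q:ℕ)+1) with hc
  set Q : Ax := ∏ i ∈ ((Finset.Icc 1 n).erase (q:ℕ)).erase ((q:ℕ)+1),
    rowA (Nat.toPNat' i) (ρ i) with hQ
  have hsplit : PRshape n ρ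
      = (rowA q c * rowA (q+1) c * Q) * facA q (Nat.toPNat' (c+1)) := by
    rw [PR_split n ρ (q:ℕ) q.pos hjn, hρ, ← hc, rowA_succ, pn_coe_pnat,
      pn_succ q.pos, pn_coe_pnat]
    ring
  have hswQ : swA q Q = Q := by
    rw [hQ, map_prod]
    apply Finset.prod_congr rfl
    intro i hi
    simp only [Finset.mem_erase, Finset.mem_Icc] at hi
    obtain ⟨hi2, hi1, hi0, _⟩ := hi
    apply swA_rowA_other
    · intro h
      apply hi1
      rw [← pn_coe (show 0 < i by omega), h]
    · intro h
      apply hi2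
      rw [← pn_coe (show 0 < i by omega), h, pnat_coe_add_one]
  have hswap : swA q (PRshape n ρ)
      = (rowA q c * rowA (q+1) c * Q) * facA (q+1) (Nat.toPNat' (c+1)) := by
    rw [hsplit]
    simp only [map_mul]
    rw [hswQ, swA_rowA_left, swA_rowA_right, swA_facA_left]
    ring
  have E := EAx hG hu q hdesc
  rw [hTG] at E
  rw [hswap] at E
  rw [hsplit] at E
  have E2 : (MvPolynomial.X q - MvPolynomial.X (q+1)) * toAx (G (u * st ((q:ℕ):ℤ)))
      = (MvPolynomial.X q - MvPolynomial.X (q+1)) * (rowA q c * rowA (q+1) c * Q) := by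
    rw [E]
    linear_combination (-(rowA q c * rowA (q+1) c * Q)) * keyfac q (Nat.toPNat' (c+1))
  have E3 := mul_left_cancel₀ (X_sub_X_ne_zero q) E2
  rw [E3]
  rw [PR_split n _ (q:ℕ) q.pos hjn, pn_coe_pnat, pn_succ q.pos, pn_coe_pnat]
  rw [Function.update_self, Function.update_of_ne (by omega : (q:ℕ)+1 ≠ (q:ℕ))]
  have hQ2 : (∏ i ∈ ((Finset.Icc 1 n).erase (q:ℕ)).erase ((q:ℕ)+1),
      rowA (Nat.toPNat' i) ((Function.update ρ (q:ℕ) (ρ ((q:ℕ)+1))) i)) = Q := by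
    rw [hQ]
    apply Finset.prod_congr rfl
    intro i hi
    simp only [Finset.mem_erase] at hi
    rw [Function.update_of_ne hi.2.1]
  rw [hQ2, ← hc]

end GrothSpanAux

namespace GrothSpanAux

open MvPolynomial Finset

/-- Shape after `t` box removals. -/
def ρfun (N r t : ℕ) (i : ℕ) : ℕ :=
  if i ≤ min t (r-1) ∨ (r+1 ≤ i ∧ i ≤ t+1) then N - i else N + 1 - i

/-- One-line values of the chain permutation after `t` box removals. -/
def Efun (N r t : ℕ) (x : ℤ) : ℤ :=
  if x ≤ ((min t (r-1) : ℕ) : ℤ) ∨ ((r:ℤ)+1 ≤ x ∧ x ≤ (t:ℤ)+1) then (N:ℤ)+1-x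
  else if x = ((min t (r-1) : ℕ) : ℤ) + 1 then (N:ℤ)+1
  else if x = (t:ℤ)+2 ∧ (r:ℤ) ≤ (t:ℤ) then (N:ℤ)+1-(r:ℤ)
  else (N:ℤ)+2-x

lemma chain {G : SPerm → MvP} (hG : GrothFamily G) {N r : ℕ} (h1 : 1 ≤ r) (hrN : r ≤ N) :
    ∀ t : ℕ, t ≤ N - 1 → ∃ w : SPerm, IsAperm w ∧
      (∀ x : ℤ, 1 ≤ x → x ≤ (N:ℤ)+1 → w x = Efun N r t x) ∧
      toAx (G w) = PRshape (N+1) (ρfun N r t) := by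
  intro t
  induction t with
  | zero =>
    intro _
    refine ⟨revP (N+1), isAperm_revP _, ?_, ?_⟩
    · intro x hx1 hx2
      rw [revP_apply]
      unfold revFun Efun
      push_cast
      split_ifs <;> omega
    · rw [G_rev_eq hG (N+1)]
      apply PR_congr
      intro i hi1 hi2
      unfold ρfun
      split_ifs <;> omega
  | succ t ih =>
    intro ht
    obtain ⟨w, hw, hev, hTG⟩ := ih (by omega)
    set j : ℕ := if t+1 ≤ r-1 then t+1 else t+2 with hj
    have hjcase : (j = t+1 ∧ t+1 ≤ r-1) ∨ (j = t+2 ∧ ¬(t+1 ≤ r-1)) := by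
      by_cases h : t+1 ≤ r-1 <;> simp [hj, h]
    have hj1 : 1 ≤ j := by rcases hjcase with ⟨e,h⟩|⟨e,h⟩ <;> omega
    have hjn : j + 1 ≤ N+1 := by rcases hjcase with ⟨e,h⟩|⟨e,h⟩ <;> omega
    have hdesc : w ((j:ℤ)+1) < w (j:ℤ) := by
      rw [hev (j:ℤ) (by omega) (by omega), hev ((j:ℤ)+1) (by omega) (by omega)]
      unfold Efun
      split_ifs <;> rcases hjcase with ⟨e,h⟩|⟨e,h⟩ <;> omega
    set q : ℕ+ := Nat.toPNat' j with hqdef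
    have hqc : (q:ℕ) = j := pn_coe hj1
    have hstep := chain_step hG hw q (by rw [hqc]; omega)
      (by rw [hqc]; exact hdesc)
      (by rw [hqc]; unfold ρfun; split_ifs <;> rcases hjcase with ⟨e,h⟩|⟨e,h⟩ <;> omega)
      hTG
    rw [hqc] at hstep
    refine ⟨w * st (j:ℤ), isAperm_mul_st hw j hj1, ?_, ?_⟩
    · intro x hx1 hx2
      have hb : 1 ≤ st (j:ℤ) x ∧ st (j:ℤ) x ≤ (N:ℤ)+1 := by
        rw [st_apply j hj1]
        split_ifs <;> omega
      rw [Equiv.Perm.mul_apply, hev (st (j:ℤ) x) hb.1 hb.2]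
      rw [st_apply j hj1]
      unfold Efun
      split_ifs <;> rcases hjcase with ⟨e,h⟩|⟨e,h⟩ <;> omega
    · rw [hstep]
      apply PR_congr
      intro i hi1 hi2
      by_cases hij : i = j
      · subst hij
        rw [Function.update_self]
        unfold ρfun
        split_ifs <;> rcases hjcase with ⟨e,h⟩|⟨e,h⟩ <;> omega
      · rw [Function.update_of_ne hij]
        unfold ρfun
        split_ifs <;> rcases hjcase with ⟨e,h⟩|⟨e,h⟩ <;> omega

lemma stair_split (N r : ℕ) (h1 : 1 ≤ r) (hrN : r ≤ N) :
    PRshape (N+1) (ρfun N r (N-1))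
      = PRshape N (fun i => N - i)
          * facA (Nat.toPNat' r) (Nat.toPNat' ((N-r)+1)) := by
  have hpeel : PRshape (N+1) (ρfun N r (N-1))
      = PRshape N (ρfun N r (N-1)) * rowA (Nat.toPNat' (N+1)) (ρfun N r (N-1) (N+1)) := by
    rw [PRshape, PRshape, Finset.prod_Icc_succ_top (by omega : 1 ≤ N+1)]
  rw [hpeel]
  have h0 : ρfun N r (N-1) (N+1) = 0 := by unfold ρfun; split_ifs <;> omega
  rw [h0, rowA_zero, mul_one]
  have hmem : r ∈ Finset.Icc 1 N := by rw [Finset.mem_Icc]; omega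
  rw [PRshape, PRshape, ← Finset.mul_prod_erase _ _ hmem,
    ← Finset.mul_prod_erase _ (fun i => rowA (Nat.toPNat' i) (N - i)) hmem]
  have hrow : ρfun N r (N-1) r = (N - r) + 1 := by unfold ρfun; split_ifs <;> omega
  rw [hrow, rowA_succ]
  have hrest : ∏ i ∈ (Finset.Icc 1 N).erase r, rowA (Nat.toPNat' i) (ρfun N r (N-1) i)
      = ∏ i ∈ (Finset.Icc 1 N).erase r, rowA (Nat.toPNat' i) (N - i) := by
    apply Finset.prod_congr rfl
    intro i hi
    simp only [Finset.mem_erase, Finset.mem_Icc] at hi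
    have : ρfun N r (N-1) i = N - i := by unfold ρfun; split_ifs <;> omega
    rw [this]
  rw [hrest]
  ring

lemma base_mem {G : SPerm → MvP} (hG : GrothFamily G) (N r : ℕ)
    (h1 : 1 ≤ r) (hrN : r ≤ N) :
    (MvPolynomial.X (Nat.toPNat' r) : Ax) * toAx (G (revP N)) ∈ WG G := by
  obtain ⟨w, hw, _, hTG⟩ := chain hG h1 hrN (N-1) (le_refl _)
  rw [stair_split N r h1 hrN, ← G_rev_eq hG N] at hTG
  set m : ℕ+ := Nat.toPNat' ((N-r)+1) with hm
  set s0 : Ry := 1 + MvPolynomial.C Polynomial.X * MvPolynomial.X m with hs0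
  have hs0mem : s0 ∈ Sy := Submonoid.subset_closure ⟨m, rfl⟩
  have hunit : IsUnit (algebraMap Ry Aloc s0) :=
    IsLocalization.map_units (M := Sy) Aloc ⟨s0, hs0mem⟩
  obtain ⟨v0, hv0⟩ := hunit.exists_right_inv
  have hCs0 : (MvPolynomial.C (algebraMap Ry Aloc s0) : Ax)
      = 1 + MvPolynomial.C bA * MvPolynomial.C (yA m) := by
    rw [hs0]
    simp only [map_add, map_mul, map_one, bA, yA]
  have heq : MvPolynomial.X (Nat.toPNat' r) * toAx (G (revP N))
        * MvPolynomial.C (algebraMap Ry Aloc s0)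
      = toAx (G w) - MvPolynomial.C (yA m) * toAx (G (revP N)) := by
    rw [hTG, hCs0]
    unfold facA
    ring
  have hX : (MvPolynomial.X (Nat.toPNat' r) : Ax) * toAx (G (revP N))
      = MvPolynomial.C v0 * toAx (G w)
        - MvPolynomial.C v0 * (MvPolynomial.C (yA m) * toAx (G (revP N))) := by
    calc (MvPolynomial.X (Nat.toPNat' r) : Ax) * toAx (G (revP N))
        = MvPolynomial.X (Nat.toPNat' r) * toAx (G (revP N))
            * (MvPolynomial.C (algebraMap Ry Aloc s0) * MvPolynomial.C v0) := by
          rw [← map_mul, hv0, map_one, mul_one]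
      _ = MvPolynomial.C v0 * (MvPolynomial.X (Nat.toPNat' r) * toAx (G (revP N))
            * MvPolynomial.C (algebraMap Ry Aloc s0)) := by ring
      _ = MvPolynomial.C v0 * (toAx (G w)
            - MvPolynomial.C (yA m) * toAx (G (revP N))) := by rw [heq]
      _ = _ := by ring
  rw [hX]
  apply Submodule.sub_mem
  · rw [← smul_eq_C_mul]
    exact Submodule.smul_mem _ _ (mem_WG G hw)
  · rw [← mul_assoc, ← map_mul, ← smul_eq_C_mul]
    exact Submodule.smul_mem _ _ (mem_WG G (isAperm_revP N))

end GrothSpanAux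

namespace GrothSpanAux

open MvPolynomial Finset

lemma mulX_gen {G : SPerm → MvP} (hG : GrothFamily G) {v : SPerm} (hv : IsAperm v)
    (s0 : ℕ+) : (MvPolynomial.X s0 : Ax) * toAx (G v) ∈ WG G := by
  obtain ⟨N0, hN0⟩ := exists_bound hv
  set N : ℕ := max N0 (s0:ℕ) with hNdef
  have hs0N : (s0:ℕ) ≤ N := le_max_right _ _
  have hfix : ∀ x : ℤ, (N:ℤ) < |x| → v x = x := by
    intro x hx
    apply hN0
    have : (N0:ℤ) ≤ (N:ℤ) := by exact_mod_cast le_max_left _ _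
    omega
  have main : ∀ (m : ℕ) (u : SPerm), IsAperm u → (∀ x : ℤ, (N:ℤ) < |x| → u x = x) →
      (Finset.Icc (1:ℤ) (N:ℤ) ×ˢ Finset.Icc (1:ℤ) (N:ℤ)).card - (invF N u).card = m →
      ∀ s : ℕ, 1 ≤ s → s ≤ N →
        (MvPolynomial.X (Nat.toPNat' s) : Ax) * toAx (G u) ∈ WG G := by
    intro m
    induction m using Nat.strong_induction_on with
    | _ m IH =>
      intro u hu hfixu hm s hs1 hsN
      by_cases hasc : ∃ k : ℕ, 1 ≤ k ∧ k + 1 ≤ N ∧ u (k:ℤ) < u ((k:ℤ)+1)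
      · obtain ⟨k, hk1, hkN, hka⟩ := hasc
        set u' : SPerm := u * st (k:ℤ) with hu'def
        have hu' : IsAperm u' := isAperm_mul_st hu k hk1
        have hfix' : ∀ x : ℤ, (N:ℤ) < |x| → u' x = x := by
          intro x hx
          have hx' : (N:ℤ) < x ∨ (N:ℤ) < -x := lt_abs.mp hx
          rw [hu'def, Equiv.Perm.mul_apply]
          have hst : st (k:ℤ) x = x := by
            rw [st_apply k hk1]
            split_ifs <;> omega
          rw [hst]
          exact hfixu x hx
        have hmeas : (Finset.Icc (1:ℤ) (N:ℤ) ×ˢ Finset.Icc (1:ℤ) (N:ℤ)).card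
            - (invF N u').card < m := by
          have h1 := invF_grow hk1 hkN hka
          rw [← hu'def] at h1
          have h2 := invF_card_le N u'
          omega
        have IH' := IH _ hmeas u' hu' hfix' rfl
        -- the descent equation for u' at k
        set q : ℕ+ := Nat.toPNat' k with hqdef
        have hqc : (q:ℕ) = k := pn_coe hk1
        have hq1c : ((q+1 : ℕ+):ℕ) = k+1 := by rw [pnat_coe_add_one, hqc]
        have hdesc : u' ((((q:ℕ):ℤ))+1) < u' (((q:ℕ):ℤ)) := by
          rw [hqc, hu'def]
          simp only [Equiv.Perm.mul_apply]
          rw [st_apply_self k hk1, st_apply_succ k hk1]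
          exact hka
        have husu : u' * st (((q:ℕ)):ℤ) = u := by
          rw [hqc, hu'def, mul_st_st u k hk1]
        have EQ := EAx hG hu' q hdesc
        rw [husu] at EQ
        -- memberships from the inductive hypothesis
        have hXk : (MvPolynomial.X q : Ax) * toAx (G u') ∈ WG G := by
          have := IH' k hk1 (by omega)
          rwa [hqdef]
        have hXk1 : (MvPolynomial.X (q+1) : Ax) * toAx (G u') ∈ WG G := by
          have := IH' (k+1) (by omega) hkN
          have hpn : Nat.toPNat' (k+1) = q + 1 := by
            rw [hqdef]; exact pn_succ hk1
          rwa [hpn] at this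
        have hTu' : toAx (G u') ∈ WG G := mem_WG G hu'
        by_cases hsk : s = k
        · -- s = k
          obtain ⟨g, hgW, hgeq⟩ := stab hG q hXk1
          have hsw2 : swA q ((MvPolynomial.X (q+1) : Ax) * toAx (G u'))
              = MvPolynomial.X q * swA q (toAx (G u')) := by
            rw [map_mul, swA_X_right]
          have E5 : (MvPolynomial.X q - MvPolynomial.X (q+1))
                * (g + (1 + MvPolynomial.C bA * MvPolynomial.X (q+1)) * toAx (G u'))
              = (MvPolynomial.X q - MvPolynomial.X (q+1))
                * (MvPolynomial.X q * toAx (G u)) := by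
            rw [mul_add, hgeq, hsw2]
            linear_combination (-(MvPolynomial.X q : Ax)) * EQ
          have E6 := mul_left_cancel₀ (X_sub_X_ne_zero q) E5
          have hpns : Nat.toPNat' s = q := by rw [hsk, hqdef]
          rw [hpns, ← E6]
          apply Submodule.add_mem _ hgW
          have hexp : (1 + MvPolynomial.C bA * MvPolynomial.X (q+1)) * toAx (G u')
              = toAx (G u') + bA • ((MvPolynomial.X (q+1) : Ax) * toAx (G u')) := by
            rw [smul_eq_C_mul]; ring
          rw [hexp]
          exact Submodule.add_mem _ hTu' (Submodule.smul_mem _ _ hXk1)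
        · by_cases hsk1 : s = k + 1
          · -- s = k+1
            obtain ⟨g, hgW, hgeq⟩ := stab hG q hXk
            have hsw1 : swA q ((MvPolynomial.X q : Ax) * toAx (G u'))
                = MvPolynomial.X (q+1) * swA q (toAx (G u')) := by
              rw [map_mul, swA_X_left]
            have E5 : (MvPolynomial.X q - MvPolynomial.X (q+1))
                  * (g - (1 + MvPolynomial.C bA * MvPolynomial.X (q+1)) * toAx (G u'))
                = (MvPolynomial.X q - MvPolynomial.X (q+1))
                  * (MvPolynomial.X (q+1) * toAx (G u)) := by
              rw [mul_sub, hgeq, hsw1]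
              linear_combination (-(MvPolynomial.X (q+1) : Ax)) * EQ
            have E6 := mul_left_cancel₀ (X_sub_X_ne_zero q) E5
            have hpns : Nat.toPNat' s = q + 1 := by
              rw [hsk1, hqdef]; exact pn_succ hk1
            rw [hpns, ← E6]
            apply Submodule.sub_mem _ hgW
            have hexp : (1 + MvPolynomial.C bA * MvPolynomial.X (q+1)) * toAx (G u')
                = toAx (G u') + bA • ((MvPolynomial.X (q+1) : Ax) * toAx (G u')) := by
              rw [smul_eq_C_mul]; ring
            rw [hexp]
            exact Submodule.add_mem _ hTu' (Submodule.smul_mem _ _ hXk1)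
          · -- s ∉ {k, k+1}
            obtain ⟨g, hgW, hgeq⟩ := stab hG q (IH' s hs1 hsN)
            have hpns : Nat.toPNat' s ≠ q := by
              intro h
              apply hsk
              rw [← pn_coe hs1, h, hqc]
            have hpns1 : Nat.toPNat' s ≠ q + 1 := by
              intro h
              apply hsk1
              rw [← pn_coe hs1, h, hq1c]
            have hsw : swA q ((MvPolynomial.X (Nat.toPNat' s) : Ax) * toAx (G u'))
                = MvPolynomial.X (Nat.toPNat' s) * swA q (toAx (G u')) := by
              rw [map_mul, swA_X_other q _ hpns hpns1]
            have E5 : (MvPolynomial.X q - MvPolynomial.X (q+1)) * g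
                = (MvPolynomial.X q - MvPolynomial.X (q+1))
                  * (MvPolynomial.X (Nat.toPNat' s) * toAx (G u)) := by
              rw [hgeq, hsw]
              linear_combination (-(MvPolynomial.X (Nat.toPNat' s) : Ax)) * EQ
            have E6 := mul_left_cancel₀ (X_sub_X_ne_zero q) E5
            rw [← E6]
            exact hgW
      · -- no ascent: u is the reverse permutation
        push_neg at hasc
        have hN1 : 1 ≤ N := le_trans s0.pos hs0N
        have hrev : u = revP N := by
          apply eq_revP_of_no_ascent hN1 hu hfixu
          intro k h1 h2
          have hne : u ((k:ℤ)+1) ≠ u (k:ℤ) := by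
            intro h
            have := u.injective h
            omega
          have hle := hasc k h1 h2
          omega
        rw [hrev]
        exact base_mem hG N s hs1 hsN
  have hfin := main _ v hv hfix rfl (s0:ℕ) s0.pos hs0N
  rwa [pn_coe_pnat] at hfin

end GrothSpanAux

namespace GrothSpanAux

open MvPolynomial

lemma mulX_span {G : SPerm → MvP} (hG : GrothFamily G) (q : ℕ+) {f : Ax}
    (hf : f ∈ WG G) : (MvPolynomial.X q : Ax) * f ∈ WG G := by
  induction hf using Submodule.span_induction with
  | mem x hx =>
    obtain ⟨u, hu, rfl⟩ := hx
    exact mulX_gen hG hu q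
  | zero =>
    rw [mul_zero]
    exact Submodule.zero_mem _
  | add x y hx hy ihx ihy =>
    rw [mul_add]
    exact Submodule.add_mem _ ihx ihy
  | smul a x hx ihx =>
    rw [mul_smul_comm]
    exact Submodule.smul_mem _ _ ihx

lemma one_mem_WG {G : SPerm → MvP} (hG : GrothFamily G) : (1 : Ax) ∈ WG G := by
  have h := hG.1 0 1 isRevA_one
  have hset : Finset.filter
      (fun p : ℕ × ℕ => 1 ≤ p.1 ∧ 1 ≤ p.2 ∧ p.1 + p.2 ≤ 0)
      (Finset.range 1 ×ˢ Finset.range 1) = ∅ := by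
    ext p
    simp only [Finset.mem_filter, Finset.mem_product, Finset.mem_range,
      Finset.notMem_empty, iff_false]
    rintro ⟨⟨h1, h2⟩, h3, h4, h5⟩
    omega
  rw [hset, Finset.prod_empty] at h
  have : toAx (G 1) = 1 := by rw [h, map_one]
  rw [← this]
  exact mem_WG G isAperm_one

theorem groth_span_aux (G : SPerm → MvP) (hG : GrothFamily G) :
    Submodule.span Aloc {P : Ax | ∃ w : SPerm, IsAperm w ∧ P = toAx (G w)} = ⊤ := by
  have hWG : Submodule.span Aloc {P : Ax | ∃ w : SPerm, IsAperm w ∧ P = toAx (G w)}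
      = WG G := rfl
  rw [hWG, eq_top_iff]
  intro P hP
  clear hP
  induction P using MvPolynomial.induction_on with
  | C a =>
    have : (MvPolynomial.C a : Ax) = a • 1 := by rw [smul_eq_C_mul, mul_one]
    rw [this]
    exact Submodule.smul_mem _ _ (one_mem_WG hG)
  | add p q hp hq =>
    exact Submodule.add_mem _ hp hq
  | mul_X p n hp =>
    rw [mul_comm]
    exact mulX_span hG n hp

end GrothSpanAux

end GrothSpanAux
/-- The `𝔸`-span of the double Grothendieck polynomials is
all of `𝔸[x]`, where `𝔸` is the localization of `ℤ[β][y]` at the elements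
`1 + β yᵢ`. -/
theorem groth_span (G : SPerm → MvP) (hG : GrothFamily G) :
    Submodule.span Aloc {P : Ax | ∃ w : SPerm, IsAperm w ∧ P = toAx (G w)} = ⊤ :=
  GrothSpanAux.groth_span_aux G hG
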